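/- Let R̄ be a nonempty compact convex subset of the nonnegative orthant of ℝ^M, let U : ℝ^M → ℝ be concave and continuously differentiable on an open convex set containing the nonnegative orthant, and let ν ∈ ℝ^M with ν ≥ 0. Let θ∞ be a maximizer of r ↦ U(r) + νᵀ r over R̄. Then for every θ in the nonnegative orthant of ℝ^M and every maximizer r̂ of the linear functional r ↦ (∇U(θ) + ν)ᵀ r over R̄, the following inequality holds: (∇U(θ) + ν)ᵀ (r̂ − θ) ≥ (U(θ∞) + νᵀ θ∞) − (U(θ) + νᵀ θ). -/

import Mathlib

open scoped RealInnerProductSpace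

/-- Lyapunov inequality: for any `θ` in the nonnegative orthant and any maximizer `r̂` of the
linear functional `r ↦ ⟪∇U(θ) + ν, r⟫` over `R̄`, the drift `⟪∇U(θ) + ν, r̂ − θ⟫` dominates
the optimality gap of the function `r ↦ U(r) + ⟪ν, r⟫`. -/
theorem stmt_6 {M : ℕ}
    (R : Set (EuclideanSpace ℝ (Fin M)))
    (hRne : R.Nonempty) (hRcompact : IsCompact R) (hRconvex : Convex ℝ R)
    (hRpos : ∀ r ∈ R, ∀ i, 0 ≤ r i)
    (V : Set (EuclideanSpace ℝ (Fin M)))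
    (hVopen : IsOpen V) (hVconvex : Convex ℝ V)
    (hVsub : {x : EuclideanSpace ℝ (Fin M) | ∀ i, 0 ≤ x i} ⊆ V)
    (U : EuclideanSpace ℝ (Fin M) → ℝ)
    (hUconc : ConcaveOn ℝ V U) (hUsmooth : ContDiffOn ℝ 1 U V)
    (ν : EuclideanSpace ℝ (Fin M)) (hν : ∀ i, 0 ≤ ν i)
    (θinf : EuclideanSpace ℝ (Fin M)) (hθinfmem : θinf ∈ R)
    (hθinfmax : IsMaxOn (fun r => U r + ⟪ν, r⟫) R θinf)
    (θ : EuclideanSpace ℝ (Fin M)) (hθ : ∀ i, 0 ≤ θ i)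
    (rhat : EuclideanSpace ℝ (Fin M)) (hrhatmem : rhat ∈ R)
    (hrhatmax : IsMaxOn (fun r => ⟪gradient U θ + ν, r⟫) R rhat) :
    (U θinf + ⟪ν, θinf⟫) - (U θ + ⟪ν, θ⟫) ≤ ⟪gradient U θ + ν, rhat - θ⟫ := by
  have hθV : θ ∈ V := hVsub hθ
  have hθinfV : θinf ∈ V := hVsub (hRpos θinf hθinfmem)
  -- differentiability of U at θ
  have hdiff : DifferentiableAt ℝ U θ :=
    (hUsmooth.contDiffAt (hVopen.mem_nhds hθV)).differentiableAt one_ne_zero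
  have hgrad : HasGradientAt U (gradient U θ) θ := hdiff.hasGradientAt
  -- gradient inequality via 1D restriction
  have key : U θinf - U θ ≤ ⟪gradient U θ, θinf - θ⟫ := by
    set L : ℝ →ᵃ[ℝ] EuclideanSpace ℝ (Fin M) := AffineMap.lineMap θ θinf with hL
    have hgconc : ConcaveOn ℝ (L ⁻¹' V) (U ∘ L) := hUconc.comp_affineMap L
    have h0 : (0 : ℝ) ∈ L ⁻¹' V := by
      simp [hL, AffineMap.lineMap_apply_zero, hθV]
    have h1 : (1 : ℝ) ∈ L ⁻¹' V := by
      simp [hL, AffineMap.lineMap_apply_one, hθinfV]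
    have hLd : HasDerivAt (fun t : ℝ => L t) (θinf - θ) 0 := by
      have h : HasDerivAt (fun t : ℝ => t • (θinf - θ) + θ) (θinf - θ) 0 := by
        simpa using ((hasDerivAt_id (0 : ℝ)).smul_const (θinf - θ)).add_const θ
      refine h.congr_of_eventuallyEq (Filter.Eventually.of_forall fun t => ?_)
      simp [hL, AffineMap.lineMap_apply, vsub_eq_sub, vadd_eq_add, add_comm]
    have hL0 : L 0 = θ := by simp [hL]
    have hF : HasFDerivAt U ((InnerProductSpace.toDual ℝ (EuclideanSpace ℝ (Fin M)))
        (gradient U θ)) (L 0) := by rw [hL0]; exact hgrad.hasFDerivAt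
    have hgderiv : HasDerivAt (U ∘ L) (⟪gradient U θ, θinf - θ⟫) 0 := by
      simpa using hF.comp_hasDerivAt (0 : ℝ) hLd
    have := hgconc.slope_le_of_hasDerivAt h0 h1 one_pos hgderiv
    rw [slope_def_field] at this
    simpa [hL, AffineMap.lineMap_apply_zero, AffineMap.lineMap_apply_one, div_one] using this
  have hlin : ⟪gradient U θ + ν, θinf⟫ ≤ ⟪gradient U θ + ν, rhat⟫ := hrhatmax hθinfmem
  have expand : ∀ x : EuclideanSpace ℝ (Fin M),
      ⟪gradient U θ + ν, x⟫ = ⟪gradient U θ, x⟫ + ⟪ν, x⟫ := fun x => inner_add_left _ _ _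
  have e1 := expand θinf
  have e2 := expand rhat
  have e3 : ⟪gradient U θ + ν, rhat - θ⟫ = ⟪gradient U θ + ν, rhat⟫ - ⟪gradient U θ + ν, θ⟫ :=
    inner_sub_right _ _ _
  have e4 := expand θ
  have e5 : ⟪gradient U θ, θinf - θ⟫ = ⟪gradient U θ, θinf⟫ - ⟪gradient U θ, θ⟫ :=
    inner_sub_right _ _ _
  linarith
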